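/- Let Q, Z be n×n positive semidefinite real symmetric matrices, R an m×m positive definite real symmetric matrix, A n×n and B n×m real matrices. Then the Riccati update Q + AᵀZA − AᵀZB(R + BᵀZB)⁻¹BᵀZA is positive semidefinite; if moreover Q is positive definite, the update is positive definite. -/

import Mathlib

open Matrix

theorem riccati_update_posSemidef {n m : ℕ}
    (Q Z : Matrix (Fin n) (Fin n) ℝ) (R : Matrix (Fin m) (Fin m) ℝ)
    (A : Matrix (Fin n) (Fin n) ℝ) (B : Matrix (Fin n) (Fin m) ℝ)
    (hQ : Q.PosSemidef) (hZ : Z.PosSemidef) (hR : R.PosDef) :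
    (Q + Aᵀ * Z * A - Aᵀ * Z * B * (R + Bᵀ * Z * B)⁻¹ * Bᵀ * Z * A).PosSemidef ∧
    (Q.PosDef →
      (Q + Aᵀ * Z * A - Aᵀ * Z * B * (R + Bᵀ * Z * B)⁻¹ * Bᵀ * Z * A).PosDef) := by
  set S : Matrix (Fin m) (Fin m) ℝ := R + Bᵀ * Z * B with hSdef
  have hBZB : (Bᵀ * Z * B).PosSemidef := by
    have := hZ.conjTranspose_mul_mul_same B
    simpa [Matrix.conjTranspose_eq_transpose_of_trivial] using this
  have hS : S.PosDef := hR.add_posSemidef hBZB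
  have hdet : IsUnit S.det := isUnit_iff_isUnit_det _ |>.1 hS.isUnit
  have hSS : S⁻¹ * S = 1 := nonsing_inv_mul _ hdet
  have hSsymm : Sᵀ = S := by
    have := hS.isHermitian
    simpa [Matrix.conjTranspose_eq_transpose_of_trivial, Matrix.IsSymm] using this
  have hSinvT : (S⁻¹)ᵀ = S⁻¹ := by
    rw [transpose_nonsing_inv, hSsymm]
  have hZsymm : Zᵀ = Z := by
    have := hZ.isHermitian
    simpa [Matrix.conjTranspose_eq_transpose_of_trivial, Matrix.IsSymm] using this
  set P : Matrix (Fin m) (Fin n) ℝ := S⁻¹ * (Bᵀ * Z * A) with hPdef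
  have hPT : Pᵀ = Aᵀ * Z * B * S⁻¹ := by
    simp [hPdef, transpose_mul, hSinvT, hZsymm, Matrix.mul_assoc]
  have key : Q + Aᵀ * Z * A - Aᵀ * Z * B * S⁻¹ * Bᵀ * Z * A
      = Q + ((A - B * P)ᵀ * Z * (A - B * P) + Pᵀ * R * P) := by
    have hPSP : Pᵀ * S * P = Aᵀ * Z * B * S⁻¹ * (Bᵀ * Z * A) := by
      rw [hPT, hPdef]
      rw [show Aᵀ * Z * B * S⁻¹ * S * (S⁻¹ * (Bᵀ * Z * A))
          = Aᵀ * Z * B * ((S⁻¹ * S) * S⁻¹) * (Bᵀ * Z * A) by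
        simp only [Matrix.mul_assoc]]
      rw [hSS, Matrix.one_mul]
    have expand : (A - B * P)ᵀ * Z * (A - B * P) + Pᵀ * R * P
        = Aᵀ * Z * A - Aᵀ * Z * (B * P) - Pᵀ * Bᵀ * Z * A + Pᵀ * S * P := by
      simp only [transpose_sub, transpose_mul, hSdef, Matrix.mul_add, Matrix.add_mul,
        Matrix.sub_mul, Matrix.mul_sub, Matrix.mul_assoc]
      abel
    rw [expand, hPSP, hPT, hPdef]
    simp only [Matrix.mul_assoc]
    abel
  constructor
  · rw [key]
    refine hQ.add (Matrix.PosSemidef.add ?_ ?_)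
    · have := hZ.conjTranspose_mul_mul_same (A - B * P)
      simpa [Matrix.conjTranspose_eq_transpose_of_trivial] using this
    · have := hR.posSemidef.conjTranspose_mul_mul_same P
      simpa [Matrix.conjTranspose_eq_transpose_of_trivial] using this
  · intro hQd
    rw [key]
    exact hQd.add_posSemidef (Matrix.PosSemidef.add
      (by simpa [Matrix.conjTranspose_eq_transpose_of_trivial] using
        hZ.conjTranspose_mul_mul_same (A - B * P))
      (by simpa [Matrix.conjTranspose_eq_transpose_of_trivial] using
        hR.posSemidef.conjTranspose_mul_mul_same P))
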